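/- Let V = ℂ² and n ≥ 2. Let Sym_k denote the space of symmetric k-multilinear maps V^k → ℂ. The linear map sending a pair (M, N) ∈ Sym_n ⊕ Sym_{n−2} to the n-multilinear map L defined by L(x₁, …, xₙ) = M(x₁, …, xₙ) + Σ_{i=1}^{n−1} ω(x_i, x_n) · N(x₁, …, x̂_i, …, x_{n−1}) (where x̂_i means x_i is omitted) is a linear isomorphism onto the subspace of n-multilinear maps Vⁿ → ℂ that are symmetric in their first n−1 arguments. -/

import Mathlib

namespace SPO
noncomputable section

abbrev V := Fin 2 → ℂ

def omg (u v : V) : ℂ := u 0 * v 1 - u 1 * v 0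

def E0 : V := fun j => if j = 0 then 1 else 0
def E1 : V := fun j => if j = 0 then 0 else 1

variable (n : ℕ)

def lastI (hn : 2 ≤ n) : Fin n := ⟨n - 1, Nat.sub_lt (by omega) Nat.one_pos⟩
def sIdx (hn : 2 ≤ n) : Fin n := ⟨n - 2, by omega⟩
def emb (hn : 2 ≤ n) (i : Fin (n - 1)) : Fin n := ⟨i.1, lt_of_lt_of_le i.isLt (Nat.sub_le n 1)⟩
def sel (hn : 2 ≤ n) (i : Fin (n - 1)) (x : Fin n → V) : Fin (n - 2) → V :=
  fun j => if j.1 < i.1 then x ⟨j.1, lt_of_lt_of_le j.isLt (Nat.sub_le n 2)⟩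
           else x ⟨j.1 + 1, lt_of_lt_of_le (Nat.succ_lt_succ j.isLt) (by omega)⟩
def front (hn : 2 ≤ n) (x : Fin n → V) : Fin (n - 2) → V :=
  fun j => x ⟨j.1, lt_of_lt_of_le j.isLt (Nat.sub_le n 2)⟩
def extF (hn : 2 ≤ n) (y : Fin (n - 2) → V) (u v : V) : Fin n → V :=
  fun j => if h : j.1 < n - 2 then y ⟨j.1, h⟩ else if j.1 = n - 2 then u else v
def skip (hn : 2 ≤ n) (i : Fin (n - 1)) (j : Fin (n - 2)) : Fin n :=
  if j.1 < i.1 then ⟨j.1, lt_of_lt_of_le j.isLt (Nat.sub_le n 2)⟩ else ⟨j.1 + 1, lt_of_lt_of_le (Nat.succ_lt_succ j.isLt) (by omega)⟩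

def Pfun (hn : 2 ≤ n) (N : (Fin (n - 2) → V) → ℂ) (x : Fin n → V) : ℂ :=
  ∑ i : Fin (n - 1), omg (x (emb n hn i)) (x (lastI n hn)) * N (sel n hn i x)

lemma vec_expand (w : V) : w = w 0 • E0 + w 1 • E1 := by
  funext j; fin_cases j <;> simp [E0, E1]

lemma cramer (a u v : V) : omg a v • u - omg a u • v = omg u v • a := by
  funext j; fin_cases j <;>
    simp only [Pi.sub_apply, Pi.smul_apply, smul_eq_mul, omg, Fin.mk_zero, Fin.mk_one] <;> ring

lemma omg_E01 : omg E0 E1 = 1 := by simp [omg, E0, E1]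

lemma sel_apply (hn : 2 ≤ n) (i : Fin (n - 1)) (x : Fin n → V) (j : Fin (n - 2)) :
    sel n hn i x j = x (skip n hn i j) := by
  simp only [sel, skip]; split_ifs <;> rfl

lemma skip_val (hn : 2 ≤ n) (i : Fin (n - 1)) (j : Fin (n - 2)) :
    (skip n hn i j).1 = if j.1 < i.1 then j.1 else j.1 + 1 := by
  simp only [skip]; split_ifs <;> rfl

lemma skip_lt (hn : 2 ≤ n) (i : Fin (n - 1)) (j : Fin (n - 2)) :
    (skip n hn i j).1 < n - 1 := by
  have := j.isLt; rw [skip_val]; split_ifs <;> omega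

lemma skip_ne_emb (hn : 2 ≤ n) (i : Fin (n - 1)) (j : Fin (n - 2)) :
    skip n hn i j ≠ emb n hn i := by
  intro h
  have hv := congrArg Fin.val h
  rw [skip_val] at hv
  simp only [emb] at hv
  split_ifs at hv <;> omega

lemma skip_inj (hn : 2 ≤ n) (i : Fin (n - 1)) {a b : Fin (n - 2)}
    (h : skip n hn i a = skip n hn i b) : a = b := by
  have hv := congrArg Fin.val h
  rw [skip_val, skip_val] at hv
  apply Fin.ext
  split_ifs at hv <;> omega


lemma sel_update_last (hn : 2 ≤ n) (i : Fin (n - 1)) (x : Fin n → V) (c : V) :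
    sel n hn i (Function.update x (lastI n hn) c) = sel n hn i x := by
  funext j
  have hj := j.isLt
  simp only [sel, Function.update_apply, lastI, Fin.mk.injEq]
  split_ifs <;> first | rfl | omega

lemma sel_update_emb (hn : 2 ≤ n) (i : Fin (n - 1)) (x : Fin n → V) (c : V) :
    sel n hn i (Function.update x (emb n hn i) c) = sel n hn i x := by
  funext j
  have hj := j.isLt
  simp only [sel, Function.update_apply, emb, Fin.mk.injEq]
  split_ifs <;> first | rfl | omega

lemma sel_update_lt (hn : 2 ≤ n) (i : Fin (n - 1)) (x : Fin n → V) (k : Fin n)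
    (hk : k.1 < i.1) (c : V) :
    sel n hn i (Function.update x k c) =
      Function.update (sel n hn i x) ⟨k.1, by have := i.isLt; omega⟩ c := by
  funext j
  have hj := j.isLt
  have hi := i.isLt
  simp only [sel, Function.update_apply, Fin.ext_iff]
  split_ifs <;> first | rfl | omega

lemma sel_update_gt (hn : 2 ≤ n) (i : Fin (n - 1)) (x : Fin n → V) (k : Fin n)
    (hk1 : i.1 < k.1) (hk2 : k.1 < n - 1) (c : V) :
    sel n hn i (Function.update x k c) =
      Function.update (sel n hn i x) ⟨k.1 - 1, by omega⟩ c := by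
  funext j
  have hj := j.isLt
  simp only [sel, Function.update_apply, Fin.ext_iff]
  split_ifs <;> first | rfl | omega

def PML (hn : 2 ≤ n) (N : MultilinearMap ℂ (fun _ : Fin (n - 2) => V) ℂ) :
    MultilinearMap ℂ (fun _ : Fin n => V) ℂ where
  toFun x := Pfun n hn (⇑N) x
  map_update_add' x k a b := by
    rename_i inst
    have hinst := Subsingleton.elim inst (instDecidableEqFin n)
    subst hinst
    simp only [Pfun, ← Finset.sum_add_distrib]
    refine Finset.sum_congr rfl fun i _ => ?_
    by_cases hk1 : k = lastI n hn
    · subst hk1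
      have hne : emb n hn i ≠ lastI n hn := by
        have := i.isLt; simp only [emb, lastI, ne_eq, Fin.ext_iff]; omega
      rw [sel_update_last, sel_update_last, sel_update_last,
        Function.update_of_ne hne, Function.update_of_ne hne, Function.update_of_ne hne,
        Function.update_self, Function.update_self, Function.update_self]
      simp only [omg, Pi.add_apply]; ring
    · have hkl : k.1 < n - 1 := by
        have := k.isLt
        have : k.1 ≠ n - 1 := fun h => hk1 (Fin.ext h)
        omega
      have hnl : k ≠ lastI n hn := hk1
      by_cases hk2 : k = emb n hn i
      · subst hk2
        have hne : emb n hn i ≠ lastI n hn := by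
          have := i.isLt; simp only [emb, lastI, ne_eq, Fin.ext_iff]; omega
        rw [sel_update_emb, sel_update_emb, sel_update_emb,
          Function.update_self, Function.update_self, Function.update_self,
          Function.update_of_ne (Ne.symm hne), Function.update_of_ne (Ne.symm hne),
          Function.update_of_ne (Ne.symm hne)]
        simp only [omg, Pi.add_apply]; ring
      · have hki : k.1 ≠ i.1 := fun h => hk2 (Fin.ext h)
        have hval : ∀ c : V, (Function.update x k c) (emb n hn i) = x (emb n hn i) :=
          fun c => Function.update_of_ne (Ne.symm hk2) c x
        have hvall : ∀ c : V, (Function.update x k c) (lastI n hn) = x (lastI n hn) :=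
          fun c => Function.update_of_ne (Ne.symm hnl) c x
        rcases lt_or_gt_of_ne hki with h | h
        · rw [sel_update_lt n hn i x k h, sel_update_lt n hn i x k h,
            sel_update_lt n hn i x k h, hval, hval, hval, hvall, hvall, hvall,
            N.map_update_add]
          ring
        · rw [sel_update_gt n hn i x k h hkl, sel_update_gt n hn i x k h hkl,
            sel_update_gt n hn i x k h hkl, hval, hval, hval, hvall, hvall, hvall,
            N.map_update_add]
          ring
  map_update_smul' x k c a := by
    rename_i inst
    have hinst := Subsingleton.elim inst (instDecidableEqFin n)
    subst hinst
    simp only [Pfun, Finset.smul_sum]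
    refine Finset.sum_congr rfl fun i _ => ?_
    by_cases hk1 : k = lastI n hn
    · subst hk1
      have hne : emb n hn i ≠ lastI n hn := by
        have := i.isLt; simp only [emb, lastI, ne_eq, Fin.ext_iff]; omega
      rw [sel_update_last, sel_update_last,
        Function.update_of_ne hne, Function.update_of_ne hne,
        Function.update_self, Function.update_self]
      simp only [omg, Pi.smul_apply, smul_eq_mul]; ring
    · have hkl : k.1 < n - 1 := by
        have := k.isLt
        have : k.1 ≠ n - 1 := fun h => hk1 (Fin.ext h)
        omega
      have hnl : k ≠ lastI n hn := hk1
      by_cases hk2 : k = emb n hn i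
      · subst hk2
        have hne : emb n hn i ≠ lastI n hn := by
          have := i.isLt; simp only [emb, lastI, ne_eq, Fin.ext_iff]; omega
        rw [sel_update_emb, sel_update_emb,
          Function.update_self, Function.update_self,
          Function.update_of_ne (Ne.symm hne), Function.update_of_ne (Ne.symm hne)]
        simp only [omg, Pi.smul_apply, smul_eq_mul]; ring
      · have hki : k.1 ≠ i.1 := fun h => hk2 (Fin.ext h)
        have hval : ∀ c : V, (Function.update x k c) (emb n hn i) = x (emb n hn i) :=
          fun c => Function.update_of_ne (Ne.symm hk2) c x
        have hvall : ∀ c : V, (Function.update x k c) (lastI n hn) = x (lastI n hn) :=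
          fun c => Function.update_of_ne (Ne.symm hnl) c x
        rcases lt_or_gt_of_ne hki with h | h
        · rw [sel_update_lt n hn i x k h, sel_update_lt n hn i x k h, hval, hval,
            hvall, hvall, N.map_update_smul]
          simp only [smul_eq_mul]; ring
        · rw [sel_update_gt n hn i x k h hkl, sel_update_gt n hn i x k h hkl, hval, hval,
            hvall, hvall, N.map_update_smul]
          simp only [smul_eq_mul]; ring

lemma PML_apply (hn : 2 ≤ n) (N : MultilinearMap ℂ (fun _ : Fin (n - 2) => V) ℂ)
    (x : Fin n → V) : PML n hn N x = Pfun n hn (⇑N) x := rfl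


lemma extF_update (hn : 2 ≤ n) (y : Fin (n - 2) → V) (j : Fin (n - 2)) (c u v : V) :
    extF n hn (Function.update y j c) u v =
      Function.update (extF n hn y u v) ⟨j.1, lt_of_lt_of_le j.isLt (Nat.sub_le n 2)⟩ c := by
  funext k
  have hj := j.isLt
  simp only [extF, Function.update_apply, Fin.ext_iff]
  split_ifs <;> first | rfl | omega | (exact congrArg y (Fin.ext (by omega)))

def embEquiv (hn : 2 ≤ n) : Fin (n - 2) ≃ {j : Fin n // j.1 < n - 2} where
  toFun i := ⟨⟨i.1, lt_of_lt_of_le i.isLt (Nat.sub_le n 2)⟩, i.isLt⟩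
  invFun j := ⟨j.1.1, j.2⟩
  left_inv i := rfl
  right_inv j := Subtype.ext (Fin.ext rfl)

def pad (hn : 2 ≤ n) (σ : Equiv.Perm (Fin (n - 2))) : Equiv.Perm (Fin n) :=
  σ.extendDomain (embEquiv n hn)

lemma pad_lt (hn : 2 ≤ n) (σ : Equiv.Perm (Fin (n - 2))) (j : Fin n) (h : j.1 < n - 2) :
    pad n hn σ j = ⟨(σ ⟨j.1, h⟩).1, by have := (σ ⟨j.1, h⟩).isLt; omega⟩ := by
  rw [pad, Equiv.Perm.extendDomain_apply_subtype σ (embEquiv n hn) h]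
  rfl

lemma pad_ge (hn : 2 ≤ n) (σ : Equiv.Perm (Fin (n - 2))) (j : Fin n) (h : ¬ j.1 < n - 2) :
    pad n hn σ j = j :=
  Equiv.Perm.extendDomain_apply_not_subtype σ (embEquiv n hn) h

lemma pad_lastI (hn : 2 ≤ n) (σ : Equiv.Perm (Fin (n - 2))) :
    pad n hn σ (lastI n hn) = lastI n hn :=
  pad_ge n hn σ _ (by simp only [lastI]; omega)

lemma extF_pad (hn : 2 ≤ n) (σ : Equiv.Perm (Fin (n - 2))) (y : Fin (n - 2) → V) (u v : V) :
    extF n hn y u v ∘ (pad n hn σ) = extF n hn (y ∘ σ) u v := by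
  funext j
  simp only [Function.comp_apply]
  by_cases h : j.1 < n - 2
  · rw [pad_lt n hn σ j h]
    have h2 := (σ ⟨j.1, h⟩).isLt
    simp only [extF, dif_pos h, dif_pos h2]
    exact congrArg y (Fin.ext rfl)
  · rw [pad_ge n hn σ j h]
    simp only [extF, dif_neg h]

def NL (hn : 2 ≤ n) (L : MultilinearMap ℂ (fun _ : Fin n => V) ℂ) :
    MultilinearMap ℂ (fun _ : Fin (n - 2) => V) ℂ where
  toFun y := (n : ℂ)⁻¹ * (L (extF n hn y E0 E1) - L (extF n hn y E1 E0))
  map_update_add' y j a b := by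
    rename_i inst
    have hinst := Subsingleton.elim inst (instDecidableEqFin (n - 2))
    subst hinst
    simp only [extF_update, L.map_update_add]
    ring
  map_update_smul' y j c a := by
    rename_i inst
    have hinst := Subsingleton.elim inst (instDecidableEqFin (n - 2))
    subst hinst
    simp only [extF_update, L.map_update_smul, smul_eq_mul]
    ring

lemma NL_apply (hn : 2 ≤ n) (L : MultilinearMap ℂ (fun _ : Fin n => V) ℂ)
    (y : Fin (n - 2) → V) :
    NL n hn L y = (n : ℂ)⁻¹ * (L (extF n hn y E0 E1) - L (extF n hn y E1 E0)) := rfl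

lemma NL_symm (hn : 2 ≤ n) (L : MultilinearMap ℂ (fun _ : Fin n => V) ℂ)
    (hL : ∀ τ : Equiv.Perm (Fin n), τ (lastI n hn) = lastI n hn →
      ∀ x : Fin n → V, L (x ∘ τ) = L x)
    (σ : Equiv.Perm (Fin (n - 2))) (y : Fin (n - 2) → V) :
    NL n hn L (y ∘ σ) = NL n hn L y := by
  rw [NL_apply, NL_apply, ← extF_pad n hn σ y E0 E1, ← extF_pad n hn σ y E1 E0,
    hL (pad n hn σ) (pad_lastI n hn σ), hL (pad n hn σ) (pad_lastI n hn σ)]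


lemma expand_slot (L : MultilinearMap ℂ (fun _ : Fin n => V) ℂ) (z : Fin n → V)
    (k : Fin n) (w : V) :
    L (Function.update z k w) =
      w 0 * L (Function.update z k E0) + w 1 * L (Function.update z k E1) := by
  conv_lhs => rw [vec_expand w]
  rw [L.map_update_add, L.map_update_smul, L.map_update_smul, smul_eq_mul, smul_eq_mul]

lemma sIdx_ne_lastI (hn : 2 ≤ n) : sIdx n hn ≠ lastI n hn := by
  simp only [sIdx, lastI, ne_eq, Fin.ext_iff]; omega

lemma extF_eq_update (hn : 2 ≤ n) (x : Fin n → V) (u v : V) :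
    Function.update (Function.update x (sIdx n hn) u) (lastI n hn) v =
      extF n hn (front n hn x) u v := by
  funext j
  have hj := j.isLt
  simp only [extF, front, Function.update_apply, sIdx, lastI, Fin.ext_iff]
  split_ifs <;> first | rfl | omega | (exact congrArg x (Fin.ext rfl))

lemma comp_swap_eq (hn : 2 ≤ n) (x : Fin n → V) :
    x ∘ (Equiv.swap (sIdx n hn) (lastI n hn)) =
      Function.update (Function.update x (sIdx n hn) (x (lastI n hn))) (lastI n hn)
        (x (sIdx n hn)) := by
  funext j
  rcases eq_or_ne j (sIdx n hn) with h | h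
  · subst h
    rw [Function.comp_apply, Equiv.swap_apply_left, Function.update_of_ne (sIdx_ne_lastI n hn),
      Function.update_self]
  · rcases eq_or_ne j (lastI n hn) with h2 | h2
    · subst h2
      rw [Function.comp_apply, Equiv.swap_apply_right, Function.update_self]
    · rw [Function.comp_apply, Equiv.swap_apply_of_ne_of_ne h h2,
        Function.update_of_ne h2, Function.update_of_ne h]

lemma self_eq_update (hn : 2 ≤ n) (x : Fin n → V) :
    x = Function.update (Function.update x (sIdx n hn) (x (sIdx n hn))) (lastI n hn)
        (x (lastI n hn)) := by
  rw [Function.update_eq_self, Function.update_eq_self]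

lemma Lswap (hn : 2 ≤ n) (L : MultilinearMap ℂ (fun _ : Fin n => V) ℂ) (x : Fin n → V) :
    L x - L (x ∘ (Equiv.swap (sIdx n hn) (lastI n hn))) =
      omg (x (sIdx n hn)) (x (lastI n hn)) *
        (L (extF n hn (front n hn x) E0 E1) - L (extF n hn (front n hn x) E1 E0)) := by
  have hne := sIdx_ne_lastI n hn
  have key : ∀ a b : V,
      L (Function.update (Function.update x (sIdx n hn) a) (lastI n hn) b) =
        a 0 * b 0 * L (Function.update (Function.update x (sIdx n hn) E0) (lastI n hn) E0) +
        a 0 * b 1 * L (Function.update (Function.update x (sIdx n hn) E0) (lastI n hn) E1) +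
        a 1 * b 0 * L (Function.update (Function.update x (sIdx n hn) E1) (lastI n hn) E0) +
        a 1 * b 1 * L (Function.update (Function.update x (sIdx n hn) E1) (lastI n hn) E1) := by
    intro a b
    rw [expand_slot n L _ (lastI n hn) b]
    simp only [Function.update_comm hne]
    rw [expand_slot n L _ (sIdx n hn) a, expand_slot n L _ (sIdx n hn) a]
    simp only [Function.update_comm hne.symm]
    ring
  have e1 : L x = L (Function.update (Function.update x (sIdx n hn) (x (sIdx n hn)))
      (lastI n hn) (x (lastI n hn))) := congrArg _ (self_eq_update n hn x)
  have e2 : L (x ∘ (Equiv.swap (sIdx n hn) (lastI n hn))) =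
      L (Function.update (Function.update x (sIdx n hn) (x (lastI n hn))) (lastI n hn)
        (x (sIdx n hn))) := congrArg _ (comp_swap_eq n hn x)
  rw [e1, e2, key (x (sIdx n hn)) (x (lastI n hn)), key (x (lastI n hn)) (x (sIdx n hn)),
    ← extF_eq_update n hn x E0 E1, ← extF_eq_update n hn x E1 E0]
  simp only [omg]
  ring


lemma Psymm (hn : 2 ≤ n) (N : (Fin (n - 2) → V) → ℂ)
    (hN : ∀ τ : Equiv.Perm (Fin (n - 2)), ∀ y : Fin (n - 2) → V, N (y ∘ τ) = N y)
    (ρ : Equiv.Perm (Fin n)) (hρ : ρ (lastI n hn) = lastI n hn) (x : Fin n → V) :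
    Pfun n hn N (x ∘ ρ) = Pfun n hn N x := by
  classical
  have hlast_ne : ∀ m : Fin n, m.1 < n - 1 → ρ m ≠ lastI n hn := by
    intro m hm h
    have := ρ.injective (h.trans hρ.symm)
    rw [this] at hm
    simp only [lastI] at hm
    omega
  have hval : ∀ i : Fin (n - 1), (ρ (emb n hn i)).1 < n - 1 := by
    intro i
    have h1 : ρ (emb n hn i) ≠ lastI n hn := hlast_ne _ i.isLt
    have h2 := (ρ (emb n hn i)).isLt
    have h3 : (ρ (emb n hn i)).1 ≠ n - 1 := fun h => h1 (Fin.ext h)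
    omega
  set ρ' : Fin (n - 1) → Fin (n - 1) := fun i => ⟨(ρ (emb n hn i)).1, hval i⟩ with hρ'def
  have hρ'inj : Function.Injective ρ' := by
    intro a b hab
    have hab' := congrArg Fin.val hab
    simp only [hρ'def] at hab'
    have h2 : ρ (emb n hn a) = ρ (emb n hn b) := Fin.ext hab'
    have h4 := congrArg Fin.val (ρ.injective h2)
    simp only [emb] at h4
    exact Fin.ext h4
  have hterm : ∀ i : Fin (n - 1),
      omg ((x ∘ ρ) (emb n hn i)) ((x ∘ ρ) (lastI n hn)) * N (sel n hn i (x ∘ ρ)) =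
      omg (x (emb n hn (ρ' i))) (x (lastI n hn)) * N (sel n hn (ρ' i) x) := by
    intro i
    have hc : (x ∘ ρ) (lastI n hn) = x (lastI n hn) := by
      simp only [Function.comp_apply, hρ]
    have he : (x ∘ ρ) (emb n hn i) = x (emb n hn (ρ' i)) := by
      simp only [Function.comp_apply]
      exact congrArg x (Fin.ext rfl).symm
    rw [hc, he]
    congr 1
    -- now N (sel i (x∘ρ)) = N (sel (ρ' i) x)
    have hskne : ∀ j : Fin (n - 2), (ρ (skip n hn i j)).1 ≠ n - 1 := by
      intro j
      exact fun h => hlast_ne _ (skip_lt n hn i j) (Fin.ext h)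
    have hskneE : ∀ j : Fin (n - 2), (ρ (skip n hn i j)).1 ≠ (ρ' i).1 := by
      intro j h
      have : ρ (skip n hn i j) = ρ (emb n hn i) := Fin.ext h
      exact skip_ne_emb n hn i j (ρ.injective this)
    set π : Fin (n - 2) → Fin (n - 2) := fun j =>
      if h : (ρ (skip n hn i j)).1 < (ρ' i).1 then
        ⟨(ρ (skip n hn i j)).1, by have := (ρ' i).isLt; omega⟩
      else
        ⟨(ρ (skip n hn i j)).1 - 1, by
          have h2 := (ρ (skip n hn i j)).isLt
          have h3 := hskne j
          have h4 := hskneE j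
          omega⟩ with hπdef
    have hπval : ∀ j : Fin (n - 2), (π j).1 =
        if (ρ (skip n hn i j)).1 < (ρ' i).1 then (ρ (skip n hn i j)).1
        else (ρ (skip n hn i j)).1 - 1 := by
      intro j; simp only [hπdef]; split_ifs <;> rfl
    have hskipπ : ∀ j : Fin (n - 2), skip n hn (ρ' i) (π j) = ρ (skip n hn i j) := by
      intro j
      have h2 := (ρ (skip n hn i j)).isLt
      have h4 := hskneE j
      have h5 := hskne j
      have h6 := (ρ' i).isLt
      apply Fin.ext
      rw [skip_val, hπval]
      split_ifs <;> omega
    have hπinj : Function.Injective π := by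
      intro a b hab
      apply skip_inj n hn i
      apply ρ.injective
      rw [← hskipπ a, ← hskipπ b, hab]
    have hsel : sel n hn i (x ∘ ρ) =
        (sel n hn (ρ' i) x) ∘ (Equiv.ofBijective π (Finite.injective_iff_bijective.mp hπinj)) := by
      funext j
      simp only [Function.comp_apply, Equiv.ofBijective_apply]
      rw [sel_apply, sel_apply, hskipπ j]
      rfl
    rw [hsel, hN]
  calc Pfun n hn N (x ∘ ρ)
      = ∑ i : Fin (n - 1), omg (x (emb n hn (ρ' i))) (x (lastI n hn)) * N (sel n hn (ρ' i) x) :=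
        Finset.sum_congr rfl fun i _ => hterm i
    _ = Pfun n hn N x := by
        rw [Pfun]
        exact Fintype.sum_bijective ρ' (Finite.injective_iff_bijective.mp hρ'inj) _ _
          (fun i => rfl)


lemma front_eq_sel (hn : 2 ≤ n) (x : Fin n → V) :
    sel n hn ⟨n - 2, by omega⟩ x = front n hn x := by
  funext j
  have hj := j.isLt
  simp only [sel, front]
  rw [if_pos]
  exact hj

lemma Pswap (hn : 2 ≤ n) (N : MultilinearMap ℂ (fun _ : Fin (n - 2) => V) ℂ)
    (hN : ∀ τ : Equiv.Perm (Fin (n - 2)), ∀ y : Fin (n - 2) → V, N (y ∘ τ) = N y)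
    (x : Fin n → V) :
    Pfun n hn (⇑N) x - Pfun n hn (⇑N) (x ∘ (Equiv.swap (sIdx n hn) (lastI n hn))) =
      (n : ℂ) * (omg (x (sIdx n hn)) (x (lastI n hn)) * N (front n hn x)) := by
  classical
  set t := Equiv.swap (sIdx n hn) (lastI n hn) with htdef
  set u := x (sIdx n hn) with hudef
  set v := x (lastI n hn) with hvdef
  set w := front n hn x with hwdef
  have hne := sIdx_ne_lastI n hn
  have hswap_other : ∀ m : Fin n, m.1 < n - 2 → t m = m := by
    intro m hm
    apply Equiv.swap_apply_of_ne_of_ne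
    · simp only [sIdx, ne_eq, Fin.ext_iff]; omega
    · simp only [lastI, ne_eq, Fin.ext_iff]; omega
  set i0 : Fin (n - 1) := ⟨n - 2, by omega⟩ with hi0def
  have hembi0 : emb n hn i0 = sIdx n hn := rfl
  have hxt_last : (x ∘ t) (lastI n hn) = u := by
    simp only [Function.comp_apply, htdef, Equiv.swap_apply_right, hudef]
  have hxt_s : (x ∘ t) (sIdx n hn) = v := by
    simp only [Function.comp_apply, htdef, Equiv.swap_apply_left, hvdef]
  have hsel_i0 : sel n hn i0 x = w := front_eq_sel n hn x
  have hsel_i0' : sel n hn i0 (x ∘ t) = w := by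
    rw [front_eq_sel n hn (x ∘ t)]
    funext j
    have hj := j.isLt
    simp only [front, Function.comp_apply, hswap_other ⟨j.1, by omega⟩ hj, hwdef]
  have hterm : ∀ i : Fin (n - 1), i ≠ i0 →
      omg (x (emb n hn i)) (x (lastI n hn)) * N (sel n hn i x) -
      omg ((x ∘ t) (emb n hn i)) ((x ∘ t) (lastI n hn)) * N (sel n hn i (x ∘ t)) =
      omg u v * N w := by
    intro i hi
    have hilt : i.1 < n - 2 := by
      have h1 := i.isLt
      have h2 : i.1 ≠ n - 2 := fun h => hi (Fin.ext h)
      omega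
    set ln : Fin (n - 2) := ⟨n - 3, by omega⟩ with hlndef
    set z := sel n hn i x with hzdef
    have hskipln : skip n hn i ln = sIdx n hn := by
      apply Fin.ext
      rw [skip_val]
      simp only [sIdx, hlndef]
      rw [if_neg (by omega)]
      omega
    have hxe : (x ∘ t) (emb n hn i) = x (emb n hn i) := by
      simp only [Function.comp_apply]
      rw [hswap_other (emb n hn i) hilt]
    have hzln : z ln = u := by
      rw [hzdef, sel_apply, hskipln, hudef]
    have hselt : sel n hn i (x ∘ t) = Function.update z ln v := by
      funext j
      have hj := j.isLt
      rcases eq_or_ne j ln with h | h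
      · subst h
        rw [Function.update_self, sel_apply, hskipln, Function.comp_apply, htdef,
          Equiv.swap_apply_left, hvdef]
      · rw [Function.update_of_ne h, sel_apply, hzdef, sel_apply]
        have hjne : j.1 ≠ n - 3 := fun hh => h (Fin.ext (by simp only [hlndef]; exact hh))
        have hlt : (skip n hn i j).1 < n - 2 := by
          rw [skip_val]
          split_ifs <;> omega
        simp only [Function.comp_apply]
        rw [hswap_other _ hlt]
    have hz_as : Function.update z ln u = z := by
      rw [← hzln, Function.update_eq_self]
    -- the cyclic permutation sending (front x) to update z ln (x (emb i))
    set c : Fin (n - 2) → Fin (n - 2) := fun j =>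
      if h1 : j.1 = n - 3 then ⟨i.1, by omega⟩
      else if h2 : j.1 < i.1 then j
      else ⟨j.1 + 1, by have := j.isLt; omega⟩ with hcdef
    have hcval : ∀ j : Fin (n - 2), (c j).1 =
        if j.1 = n - 3 then i.1 else if j.1 < i.1 then j.1 else j.1 + 1 := by
      intro j; simp only [hcdef]; split_ifs <;> rfl
    have hcinj : Function.Injective c := by
      intro a b hab
      have hab' := congrArg Fin.val hab
      rw [hcval, hcval] at hab'
      have ha := a.isLt
      have hb := b.isLt
      apply Fin.ext
      split_ifs at hab' <;> omega
    have hupd : Function.update z ln (x (emb n hn i)) = w ∘ c := by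
      funext j
      have hj := j.isLt
      rcases eq_or_ne j ln with h | h
      · subst h
        rw [Function.update_self, Function.comp_apply, hwdef]
        simp only [front]
        refine congrArg x (Fin.ext ?_).symm
        rw [hcval]
        simp only [hlndef]
        simp [emb]
      · rw [Function.update_of_ne h, Function.comp_apply, hzdef, sel_apply, hwdef]
        have hjne : j.1 ≠ n - 3 := fun hh => h (Fin.ext (by simp only [hlndef]; exact hh))
        simp only [front]
        refine congrArg x (Fin.ext ?_)
        rw [skip_val, hcval, if_neg hjne]
    have step4 : N (Function.update z ln (x (emb n hn i))) = N w := by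
      rw [hupd]
      have : w ∘ c = w ∘ ⇑(Equiv.ofBijective c (Finite.injective_iff_bijective.mp hcinj)) := rfl
      rw [this, hN]
    rw [hxe, hselt, hxt_last]
    calc omg (x (emb n hn i)) v * N z - omg (x (emb n hn i)) u * N (Function.update z ln v)
        = omg (x (emb n hn i)) v * N (Function.update z ln u)
            - omg (x (emb n hn i)) u * N (Function.update z ln v) := by rw [hz_as]
      _ = N (Function.update z ln (omg (x (emb n hn i)) v • u - omg (x (emb n hn i)) u • v)) := by
          rw [N.map_update_sub, N.map_update_smul, N.map_update_smul, smul_eq_mul, smul_eq_mul]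
      _ = N (Function.update z ln (omg u v • x (emb n hn i))) := by rw [cramer]
      _ = omg u v * N (Function.update z ln (x (emb n hn i))) := by
          rw [N.map_update_smul, smul_eq_mul]
      _ = omg u v * N w := by rw [step4]
  -- assemble
  rw [Pfun, Pfun]
  rw [← Finset.add_sum_erase Finset.univ
      (fun i => omg (x (emb n hn i)) (x (lastI n hn)) * N (sel n hn i x)) (Finset.mem_univ i0),
    ← Finset.add_sum_erase Finset.univ
      (fun i => omg ((x ∘ t) (emb n hn i)) ((x ∘ t) (lastI n hn)) * N (sel n hn i (x ∘ t)))
      (Finset.mem_univ i0)]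
  have hA : omg (x (emb n hn i0)) (x (lastI n hn)) * N (sel n hn i0 x) = omg u v * N w := by
    rw [hembi0, hsel_i0, ← hudef, ← hvdef]
  have hB : omg ((x ∘ t) (emb n hn i0)) ((x ∘ t) (lastI n hn)) * N (sel n hn i0 (x ∘ t)) =
      - (omg u v * N w) := by
    rw [hembi0, hxt_s, hxt_last, hsel_i0']
    simp only [omg]; ring
  have hC : (∑ i ∈ Finset.univ.erase i0,
        omg (x (emb n hn i)) (x (lastI n hn)) * N (sel n hn i x)) -
      (∑ i ∈ Finset.univ.erase i0,
        omg ((x ∘ t) (emb n hn i)) ((x ∘ t) (lastI n hn)) * N (sel n hn i (x ∘ t))) =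
      ((n : ℂ) - 2) * (omg u v * N w) := by
    rw [← Finset.sum_sub_distrib,
      Finset.sum_congr rfl (fun i hi => hterm i (Finset.ne_of_mem_erase hi)),
      Finset.sum_const, Finset.card_erase_of_mem (Finset.mem_univ i0), Finset.card_univ,
      Fintype.card_fin, nsmul_eq_mul]
    have hcard : n - 1 - 1 = n - 2 := by omega
    rw [hcard]
    have hcast : ((n - 2 : ℕ) : ℂ) = (n : ℂ) - 2 := by
      push_cast [Nat.cast_sub hn]
      ring
    rw [hcast]
  linear_combination hA - hB + hC


lemma allPerm (hn : 2 ≤ n) (g : (Fin n → V) → ℂ)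
    (h1 : ∀ ρ : Equiv.Perm (Fin n), ρ (lastI n hn) = lastI n hn →
      ∀ x : Fin n → V, g (x ∘ ρ) = g x)
    (h2 : ∀ x : Fin n → V, g (x ∘ (Equiv.swap (sIdx n hn) (lastI n hn))) = g x) :
    ∀ τ : Equiv.Perm (Fin n), ∀ x : Fin n → V, g (x ∘ τ) = g x := by
  intro τ x
  by_cases hτ : τ (lastI n hn) = lastI n hn
  · exact h1 τ hτ x
  · set t := Equiv.swap (sIdx n hn) (lastI n hn) with htdef
    set σ := Equiv.swap (τ (lastI n hn)) (sIdx n hn) with hσdef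
    set ρ := (τ.trans σ).trans t with hρdef
    have hρl : ρ (lastI n hn) = lastI n hn := by
      simp only [hρdef, Equiv.trans_apply, hσdef, Equiv.swap_apply_left, htdef,
        Equiv.swap_apply_left]
    have hσl : σ (lastI n hn) = lastI n hn := by
      apply Equiv.swap_apply_of_ne_of_ne
      · exact fun h => hτ h.symm
      · exact (sIdx_ne_lastI n hn).symm
    have hτσ : ⇑τ = ⇑σ ∘ ⇑t ∘ ⇑ρ := by
      funext j
      simp only [Function.comp_apply, hρdef, Equiv.trans_apply, htdef, Equiv.swap_apply_self,
        hσdef, Equiv.swap_apply_self]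
    rw [hτσ]
    have hassoc : x ∘ (⇑σ ∘ ⇑t ∘ ⇑ρ) = (((x ∘ ⇑σ) ∘ ⇑t) ∘ ⇑ρ) := rfl
    rw [hassoc, h1 ρ hρl, h2, h1 σ hσl]

end
end SPO

/-- The inductive step of Lemma 6.2: the linear map
`(M, N) ↦ (x ↦ M(x₁,…,xₙ) + Σᵢ ω(xᵢ, xₙ) N(x₁,…,x̂ᵢ,…,x_{n-1}))` restricts to a linear
isomorphism from `Sym_n ⊕ Sym_{n-2}` onto the space of `n`-multilinear maps `(ℂ²)ⁿ → ℂ`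
symmetric in their first `n-1` arguments. -/
theorem sym_plus_omega_iso (n : ℕ) (hn : 2 ≤ n) :
    let V := Fin 2 → ℂ
    let ω : V → V → ℂ := fun u v => u 0 * v 1 - u 1 * v 0
    let Φ : (MultilinearMap ℂ (fun _ : Fin n => V) ℂ ×
        MultilinearMap ℂ (fun _ : Fin (n - 2) => V) ℂ) → ((Fin n → V) → ℂ) :=
      fun MN x => MN.1 x + ∑ i : Fin (n - 1),
        ω (x ⟨i.1, by have := i.isLt; omega⟩) (x ⟨n - 1, by omega⟩) *
          MN.2 (fun j : Fin (n - 2) =>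
            if j.1 < i.1 then x ⟨j.1, by have := j.isLt; omega⟩
            else x ⟨j.1 + 1, by have := j.isLt; omega⟩)
    let Dom : Set (MultilinearMap ℂ (fun _ : Fin n => V) ℂ ×
        MultilinearMap ℂ (fun _ : Fin (n - 2) => V) ℂ) :=
      {MN | (∀ τ : Equiv.Perm (Fin n), ∀ y : Fin n → V, MN.1 (y ∘ τ) = MN.1 y) ∧
        (∀ τ : Equiv.Perm (Fin (n - 2)), ∀ y : Fin (n - 2) → V, MN.2 (y ∘ τ) = MN.2 y)}
    IsLinearMap ℂ Φ ∧ Set.InjOn Φ Dom ∧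
      Φ '' Dom = {f : (Fin n → V) → ℂ |
        ∃ L : MultilinearMap ℂ (fun _ : Fin n => V) ℂ,
          (∀ τ : Equiv.Perm (Fin n), τ ⟨n - 1, by omega⟩ = ⟨n - 1, by omega⟩ →
            ∀ x : Fin n → V, L (x ∘ τ) = L x) ∧ f = ⇑L} := by
  intro V ω Φ Dom
  have hΦ : Φ = fun (MN : MultilinearMap ℂ (fun _ : Fin n => SPO.V) ℂ ×
      MultilinearMap ℂ (fun _ : Fin (n - 2) => SPO.V) ℂ) (x : Fin n → SPO.V) =>
      MN.1 x + SPO.Pfun n hn (⇑MN.2) x := rfl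
  refine ⟨?_, ?_, ?_⟩
  · constructor
    · intro p q
      funext x
      simp only [hΦ, Pi.add_apply, Prod.fst_add, Prod.snd_add, MultilinearMap.add_apply,
        SPO.Pfun, mul_add, Finset.sum_add_distrib]
      ring
    · intro c p
      funext x
      simp only [hΦ, Pi.smul_apply, Prod.smul_fst, Prod.smul_snd, MultilinearMap.smul_apply,
        SPO.Pfun, smul_eq_mul]
      rw [mul_add, Finset.mul_sum]
      congr 1
      exact Finset.sum_congr rfl fun i _ => by ring
  · intro p hp q hq hpq
    have hp' : (∀ τ : Equiv.Perm (Fin n), ∀ y : Fin n → V, p.1 (y ∘ τ) = p.1 y) ∧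
        (∀ τ : Equiv.Perm (Fin (n - 2)), ∀ y : Fin (n - 2) → SPO.V, p.2 (y ∘ τ) = p.2 y) := hp
    have hq' : (∀ τ : Equiv.Perm (Fin n), ∀ y : Fin n → V, q.1 (y ∘ τ) = q.1 y) ∧
        (∀ τ : Equiv.Perm (Fin (n - 2)), ∀ y : Fin (n - 2) → SPO.V, q.2 (y ∘ τ) = q.2 y) := hq
    have hzero : ∀ x : Fin n → SPO.V, (p.1 - q.1) x + SPO.Pfun n hn (⇑(p.2 - q.2)) x = 0 := by
      intro x
      have h1 : Φ p x = Φ q x := congrFun hpq x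
      simp only [hΦ] at h1
      simp only [MultilinearMap.sub_apply, SPO.Pfun, mul_sub, Finset.sum_sub_distrib]
      simp only [SPO.Pfun] at h1
      linear_combination h1
    have hDsym : ∀ τ : Equiv.Perm (Fin n), ∀ y : Fin n → SPO.V,
        (p.1 - q.1) (y ∘ τ) = (p.1 - q.1) y := by
      intro τ y
      simp only [MultilinearMap.sub_apply, hp'.1 τ y, hq'.1 τ y]
    have hEsym : ∀ τ : Equiv.Perm (Fin (n - 2)), ∀ y : Fin (n - 2) → SPO.V,
        (p.2 - q.2) (y ∘ τ) = (p.2 - q.2) y := by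
      intro τ y
      simp only [MultilinearMap.sub_apply, hp'.2 τ y, hq'.2 τ y]
    have hE0 : ∀ y : Fin (n - 2) → SPO.V, (p.2 - q.2) y = 0 := by
      intro y
      set x := SPO.extF n hn y SPO.E0 SPO.E1 with hxdef
      have hsw := SPO.Pswap n hn (p.2 - q.2) hEsym x
      have hD := hDsym (Equiv.swap (SPO.sIdx n hn) (SPO.lastI n hn)) x
      have h1 := hzero x
      have h2 := hzero (x ∘ (Equiv.swap (SPO.sIdx n hn) (SPO.lastI n hn)))
      have hxs : x (SPO.sIdx n hn) = SPO.E0 := by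
        simp only [hxdef, SPO.extF, SPO.sIdx]
        rw [dif_neg (by omega)]
        simp
      have hxl : x (SPO.lastI n hn) = SPO.E1 := by
        simp only [hxdef, SPO.extF, SPO.lastI]
        rw [dif_neg (by omega), if_neg (by omega)]
      have hfr : SPO.front n hn x = y := by
        funext j
        have hj := j.isLt
        simp only [hxdef, SPO.front, SPO.extF]
        rw [dif_pos hj]
      rw [hxs, hxl, hfr, SPO.omg_E01] at hsw
      have hn0 : (n : ℂ) ≠ 0 := Nat.cast_ne_zero.mpr (by omega)
      have hfin : (n : ℂ) * (1 * (p.2 - q.2) y) = 0 := by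
        linear_combination h1 - h2 + hD - hsw
      rcases mul_eq_zero.mp hfin with h | h
      · exact absurd h hn0
      · simpa using h
    have h2eq : p.2 = q.2 := by
      apply MultilinearMap.ext
      intro y
      have h := hE0 y
      rw [MultilinearMap.sub_apply, sub_eq_zero] at h
      exact h
    have h1eq : p.1 = q.1 := by
      apply MultilinearMap.ext
      intro x
      have h1 := hzero x
      have hP0 : SPO.Pfun n hn (⇑(p.2 - q.2)) x = 0 := by
        apply Finset.sum_eq_zero
        intro i _
        rw [hE0, mul_zero]
      rw [hP0, add_zero, MultilinearMap.sub_apply, sub_eq_zero] at h1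
      exact h1
    exact Prod.ext h1eq h2eq
  · ext f
    simp only [Set.mem_image, Set.mem_setOf_eq]
    constructor
    · rintro ⟨p, hp, rfl⟩
      have hp' : (∀ τ : Equiv.Perm (Fin n), ∀ y : Fin n → SPO.V, p.1 (y ∘ τ) = p.1 y) ∧
          (∀ τ : Equiv.Perm (Fin (n - 2)), ∀ y : Fin (n - 2) → SPO.V, p.2 (y ∘ τ) = p.2 y) := hp
      refine ⟨p.1 + SPO.PML n hn p.2, ?_, ?_⟩
      · intro τ hτ x
        have hτ' : τ (SPO.lastI n hn) = SPO.lastI n hn := hτ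
        simp only [MultilinearMap.add_apply, SPO.PML_apply]
        rw [hp'.1 τ x, SPO.Psymm n hn (⇑p.2) hp'.2 τ hτ' x]
      · funext x
        simp only [hΦ, MultilinearMap.add_apply, SPO.PML_apply]
    · rintro ⟨L, hL, rfl⟩
      have hL' : ∀ τ : Equiv.Perm (Fin n), τ (SPO.lastI n hn) = SPO.lastI n hn →
          ∀ x : Fin n → SPO.V, L (x ∘ τ) = L x := hL
      set N := SPO.NL n hn L with hNdef
      have hNsym : ∀ τ : Equiv.Perm (Fin (n - 2)), ∀ y : Fin (n - 2) → SPO.V,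
          N (y ∘ τ) = N y := fun τ y => SPO.NL_symm n hn L hL' τ y
      set M := L - SPO.PML n hn N with hMdef
      have hMapp : ∀ x : Fin n → SPO.V, M x = L x - SPO.Pfun n hn (⇑N) x := fun x => rfl
      have hn0 : (n : ℂ) ≠ 0 := Nat.cast_ne_zero.mpr (by omega)
      have hkey : ∀ x : Fin n → SPO.V,
          L x - L (x ∘ (Equiv.swap (SPO.sIdx n hn) (SPO.lastI n hn))) =
          SPO.Pfun n hn (⇑N) x -
            SPO.Pfun n hn (⇑N) (x ∘ (Equiv.swap (SPO.sIdx n hn) (SPO.lastI n hn))) := by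
        intro x
        rw [SPO.Lswap n hn L x, SPO.Pswap n hn N hNsym x, hNdef, SPO.NL_apply]
        field_simp
      have hMswap : ∀ x : Fin n → SPO.V,
          M (x ∘ (Equiv.swap (SPO.sIdx n hn) (SPO.lastI n hn))) = M x := by
        intro x
        rw [hMapp, hMapp]
        linear_combination (-1 : ℂ) * hkey x
      have hMperm : ∀ τ : Equiv.Perm (Fin n), ∀ x : Fin n → SPO.V, M (x ∘ τ) = M x := by
        refine SPO.allPerm n hn (⇑M) ?_ hMswap
        intro ρ hρ x
        rw [hMapp, hMapp, hL' ρ hρ x, SPO.Psymm n hn (⇑N) hNsym ρ hρ x]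
      refine ⟨(M, N), ⟨hMperm, hNsym⟩, ?_⟩
      funext x
      simp only [hΦ]
      show M x + SPO.Pfun n hn (⇑N) x = L x
      rw [hMapp]
      ring_nf
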